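/- Let 𝔯 be a totally real subspace of E, let T ∈ 𝔯, let W ∈ E be orthogonal to ℂ𝔯 = 𝔯 + J𝔯, and let y ∈ ℝ. Then for all a ∈ ℝ and S ∈ 𝔯 one has exp(ad(2JT+2W+yZ))(aB+S) = aB + S − a(JT+W) − (ay + 2⟨T,S⟩)Z; consequently, exp(ad(2JT+2W+yZ))(ℝB ⊕ 𝔯) = ℝ(B − JT − W − yZ) ⊕ ℝ(T − 2‖T‖²Z) ⊕ (𝔯 ⊖ ℝT). -/

import Mathlib

open scoped RealInnerProductSpace

noncomputable section

namespace CHn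

/-- `E n` is `ℂ^{n-1}`, viewed as a real inner product space with `⟪U,V⟫ = Re⟪U,V⟫_ℂ`
and complex structure `JU = iU`. -/
abbrev E (n : ℕ) := EuclideanSpace ℂ (Fin (n - 1))

/-- The solvable part `𝔰 = 𝔞 ⊕ 𝔫` of the Iwasawa decomposition of `𝔰𝔲(1,n)`, modeled as
`ℝB ⊕ E ⊕ ℝZ`; the element `(a, U, x)` represents `aB + U + xZ`. -/
abbrev S (n : ℕ) := ℝ × E n × ℝ

variable (n : ℕ)

/-- The vector `B`. -/
def B : S n := (1, 0, 0)

/-- The vector `Z`. -/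
def Z : S n := (0, 0, 1)

/-- The inner product of `𝔰` (`B`, `Z` unit, orthogonal direct sum `ℝB ⊕ E ⊕ ℝZ`). -/
def sInner (X Y : S n) : ℝ := X.1 * Y.1 + ⟪X.2.1, Y.2.1⟫ + X.2.2 * Y.2.2

/-- The ambient complex structure on `𝔰`: `J(aB + U + xZ) = -xB + JU + aZ`. -/
def Js : S n →ₗ[ℝ] S n where
  toFun X := (-X.2.2, Complex.I • X.2.1, X.1)
  map_add' X Y := by
    refine Prod.ext ?_ (Prod.ext ?_ ?_)
    · simp; ring
    · simp [smul_add]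
    · simp
  map_smul' c X := by
    refine Prod.ext ?_ (Prod.ext ?_ ?_)
    · simp only [Prod.smul_fst, Prod.smul_snd, smul_eq_mul, RingHom.id_apply]; ring
    · simp [Prod.smul_fst, Prod.smul_snd, smul_comm c Complex.I]
    · simp

/-- The Lie bracket of `𝔰`:
`[aB + U + xZ, bB + V + yZ] = (1/2)(aV - bU) + (ay - bx + ⟪JU, V⟫)Z`. -/
def bra (X Y : S n) : S n :=
  (0, (2⁻¹ : ℝ) • (X.1 • Y.2.1 - Y.1 • X.2.1),
    X.1 * Y.2.2 - Y.1 * X.2.2 + ⟪Complex.I • X.2.1, Y.2.1⟫)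

/-- `ad(X) = [X, ·]`, a (continuous) linear endomorphism of `𝔰`. -/
def ad (X : S n) : S n →L[ℝ] S n :=
  LinearMap.toContinuousLinearMap
    { toFun := bra n X
      map_add' := fun Y Y' => by
        unfold bra
        refine Prod.ext ?_ (Prod.ext ?_ ?_)
        · simp
        · simp only [Prod.fst_add, Prod.snd_add]
          module
        · simp only [Prod.fst_add, Prod.snd_add, inner_add_right]
          ring
      map_smul' := fun c Y => by
        unfold bra
        have h : ⟪Complex.I • X.2.1, c • Y.2.1⟫ = c * ⟪Complex.I • X.2.1, Y.2.1⟫ :=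
          real_inner_smul_right _ _ _
        refine Prod.ext ?_ (Prod.ext ?_ ?_)
        · simp
        · simp only [Prod.smul_fst, Prod.smul_snd, smul_eq_mul, RingHom.id_apply]
          module
        · simp only [Prod.smul_fst, Prod.smul_snd, smul_eq_mul, h, RingHom.id_apply]
          ring }

/-- `exp(ad(X)) = Σ_{k ≥ 0} ad(X)^k / k!`. -/
def expAd (X : S n) : S n →L[ℝ] S n := NormedSpace.exp (ad n X)

/-- `ρ(t) = (e^t - 1)/t` for `t ≠ 0`, `ρ(0) = 1`. -/
def rho (t : ℝ) : ℝ := if t = 0 then 1 else (Real.exp t - 1) / t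

/-- The Iwasawa group `AN`, modeled as `G = ℝ × E × ℝ`. -/
abbrev G (n : ℕ) := ℝ × E n × ℝ

/-- The product of `G`:
`(a,P,p)·(b,Q,q) = (a+b, P + e^{a/2}Q, p + e^a q + (1/2)e^{a/2}⟪JP,Q⟫)`. -/
def gmul (g h : G n) : G n :=
  (g.1 + h.1, g.2.1 + Real.exp (g.1 / 2) • h.2.1,
    g.2.2 + Real.exp g.1 * h.2.2 + 2⁻¹ * Real.exp (g.1 / 2) * ⟪Complex.I • g.2.1, h.2.1⟫)

/-- The Lie exponential `Exp : 𝔰 → G`, `Exp(cB + W + zZ) = (c, ρ(c/2)W, ρ(c)z)`. -/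
def Exp (X : S n) : G n := (X.1, rho (X.1 / 2) • X.2.1, rho X.1 * X.2.2)

/-- The inclusion of `E` into `𝔰`. -/
def inE : E n →ₗ[ℝ] S n where
  toFun U := (0, U, 0)
  map_add' U V := by refine Prod.ext ?_ (Prod.ext ?_ ?_) <;> simp
  map_smul' c U := by refine Prod.ext ?_ (Prod.ext ?_ ?_) <;> simp

/-- A real subspace of `E` is totally real if `⟪Ju, v⟫ = 0` for all its elements. -/
def TotallyRealE (V : Submodule ℝ (E n)) : Prop :=
  ∀ u ∈ V, ∀ v ∈ V, ⟪Complex.I • u, v⟫ = 0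

/-- A real subspace of `E` is complex if it is `J`-invariant. -/
def IsComplexE (V : Submodule ℝ (E n)) : Prop :=
  ∀ u ∈ V, Complex.I • u ∈ V

/-- The maximal complex subspace `V ∩ JV` of a real subspace `V` of `E`. -/
def maxCE (V : Submodule ℝ (E n)) : Set (E n) := {w | w ∈ V ∧ Complex.I • w ∈ V}

/-- `V` is a CR subspace of `E` if the orthogonal complement in `V` of its maximal
complex subspace `V ∩ JV` is totally real. -/
def IsCRE (V : Submodule ℝ (E n)) : Prop :=
  ∀ u ∈ V, ∀ v ∈ V, (∀ w ∈ maxCE n V, ⟪u, w⟫ = 0) →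
    (∀ w ∈ maxCE n V, ⟪v, w⟫ = 0) → ⟪Complex.I • u, v⟫ = 0

/-- A subset of `𝔰` is totally real if `⟪Ju, v⟫ = 0` for all its elements. -/
def TotallyRealS (V : Set (S n)) : Prop := ∀ u ∈ V, ∀ v ∈ V, sInner n (Js n u) v = 0

/-- The maximal complex subspace `V ∩ JV` of a real subspace `V` of `𝔰`. -/
def maxCS (V : Set (S n)) : Set (S n) := {x | x ∈ V ∧ Js n x ∈ V}

/-- `V` is a CR subspace of `𝔰` if the orthogonal complement in `V` of its maximal
complex subspace `V ∩ JV` is totally real. -/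
def IsCRS (V : Set (S n)) : Prop :=
  ∀ u ∈ V, ∀ v ∈ V, (∀ w ∈ maxCS n V, sInner n u w = 0) →
    (∀ w ∈ maxCS n V, sInner n v w = 0) → sInner n (Js n u) v = 0



/-! ### Auxiliary lemmas for statement 10 -/

lemma inner_I_left' {m : ℕ} (u v : EuclideanSpace ℂ (Fin m)) :
    ⟪Complex.I • u, v⟫ = -⟪u, Complex.I • v⟫ := by
  simp only [PiLp.inner_apply]
  rw [← Finset.sum_neg_distrib]
  exact Finset.sum_congr rfl fun i _ => by simp [Complex.inner, Complex.ext_iff]; ring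

lemma inner_I_self' {m : ℕ} (u : EuclideanSpace ℂ (Fin m)) : ⟪Complex.I • u, u⟫ = 0 := by
  have h1 := inner_I_left' u u
  have h2 : ⟪u, Complex.I • u⟫ = ⟪Complex.I • u, u⟫ := real_inner_comm _ _
  linarith [h2.symm ▸ h1]

lemma exp_of_sq_zero' {M : Type*} [NormedAddCommGroup M] [NormedSpace ℝ M] [CompleteSpace M]
    (A : M →L[ℝ] M) (h : A ^ 2 = 0) : NormedSpace.exp A = 1 + A := by
  have hz : ∀ k, 2 ≤ k → A ^ k = 0 := by
    intro k hk
    have : A ^ k = A ^ 2 * A ^ (k - 2) := by rw [← pow_add]; congr 1; omega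
    simp [this, h]
  rw [NormedSpace.exp_eq_tsum ℝ]
  show (∑' k : ℕ, (k.factorial : ℝ)⁻¹ • A ^ k) = 1 + A
  rw [tsum_eq_sum (s := Finset.range 2) (by intro b hb; simp at hb; simp [hz b hb])]
  simp [Finset.sum_range_succ]

lemma adQ_apply (n : ℕ) (Q : E n) (y : ℝ) (Y : S n) :
    ad n ((0, Q, y) : S n) Y
      = ((0, -((2⁻¹ * Y.1) • Q), -(Y.1 * y) + ⟪Complex.I • Q, Y.2.1⟫) : S n) := by
  show bra n ((0, Q, y) : S n) Y = _
  unfold bra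
  refine Prod.ext rfl (Prod.ext ?_ ?_)
  · show (2⁻¹ : ℝ) • ((0 : ℝ) • Y.2.1 - Y.1 • Q) = -((2⁻¹ * Y.1) • Q)
    module
  · show (0 : ℝ) * Y.2.2 - Y.1 * y + ⟪Complex.I • Q, Y.2.1⟫ = _
    ring

lemma adQ_sq_zero (n : ℕ) (Q : E n) (y : ℝ) : (ad n ((0, Q, y) : S n)) ^ 2 = 0 := by
  refine ContinuousLinearMap.ext fun Y => ?_
  rw [pow_two, ContinuousLinearMap.mul_apply, adQ_apply, adQ_apply]
  rw [inner_neg_right, real_inner_smul_right, inner_I_self']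
  simp

lemma expQ_apply (n : ℕ) (Q : E n) (y : ℝ) (Y : S n) :
    expAd n ((0, Q, y) : S n) Y
      = Y + ((0, -((2⁻¹ * Y.1) • Q), -(Y.1 * y) + ⟪Complex.I • Q, Y.2.1⟫) : S n) := by
  rw [expAd, exp_of_sq_zero' _ (adQ_sq_zero n Q y), ContinuousLinearMap.add_apply,
    ContinuousLinearMap.one_apply, adQ_apply]


/-- for `𝔯` totally real, `T ∈ 𝔯`, `W ⟂ ℂ𝔯`, `y ∈ ℝ`:
`exp(ad(2JT+2W+yZ))(aB+S) = aB + S − a(JT+W) − (ay + 2⟨T,S⟩)Z` for all `a ∈ ℝ`, `S ∈ 𝔯`, and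
`exp(ad(2JT+2W+yZ))(ℝB ⊕ 𝔯) = ℝ(B − JT − W − yZ) ⊕ ℝ(T − 2‖T‖²Z) ⊕ (𝔯 ⊖ ℝT)`. -/
theorem statement10 (n : ℕ) (hn : 2 ≤ n) (𝔯 : Submodule ℝ (E n)) (h𝔯 : TotallyRealE n 𝔯)
    (T : E n) (hT : T ∈ 𝔯) (W : E n)
    (hW : ∀ u ∈ 𝔯, ⟪W, u⟫ = 0 ∧ ⟪W, Complex.I • u⟫ = 0) (y : ℝ) :
    (∀ a : ℝ, ∀ Sv ∈ 𝔯,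
      expAd n ((0, (2 : ℝ) • (Complex.I • T) + (2 : ℝ) • W, y) : S n) ((a, Sv, 0) : S n) =
        ((a, Sv - a • (Complex.I • T + W), -(a * y + 2 * ⟪T, Sv⟫)) : S n)) ∧
    Submodule.map
        (expAd n ((0, (2 : ℝ) • (Complex.I • T) + (2 : ℝ) • W, y) : S n)).toLinearMap
        (Submodule.span ℝ {B n} ⊔ Submodule.map (inE n) 𝔯) =
      Submodule.span ℝ {((1, -(Complex.I • T) - W, -y) : S n)} ⊔
        Submodule.span ℝ {((0, T, -(2 * ‖T‖ ^ 2)) : S n)} ⊔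
        Submodule.map (inE n) (𝔯 ⊓ (Submodule.span ℝ {T})ᗮ) := by
  have hIQ : Complex.I • ((2 : ℝ) • (Complex.I • T) + (2 : ℝ) • W)
      = (2 : ℝ) • (-T) + (2 : ℝ) • (Complex.I • W) := by
    rw [smul_add, smul_comm Complex.I (2 : ℝ), smul_comm Complex.I (2 : ℝ), smul_smul,
      Complex.I_mul_I, neg_one_smul]
  have hIQS : ∀ Sv, Sv ∈ 𝔯 →
      ⟪Complex.I • ((2 : ℝ) • (Complex.I • T) + (2 : ℝ) • W), Sv⟫ = -(2 * ⟪T, Sv⟫) := by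
    intro Sv hSv
    rw [hIQ, inner_add_left, real_inner_smul_left, real_inner_smul_left, inner_neg_left,
      inner_I_left' W Sv, (hW Sv hSv).2]
    ring
  have part1 : ∀ a : ℝ, ∀ Sv ∈ 𝔯,
      expAd n ((0, (2 : ℝ) • (Complex.I • T) + (2 : ℝ) • W, y) : S n) ((a, Sv, 0) : S n) =
        ((a, Sv - a • (Complex.I • T + W), -(a * y + 2 * ⟪T, Sv⟫)) : S n) := by
    intro a Sv hSv
    rw [expQ_apply]
    refine Prod.ext ?_ (Prod.ext ?_ ?_)
    · show a + 0 = a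
      ring
    · show Sv + -((2⁻¹ * a) • ((2 : ℝ) • (Complex.I • T) + (2 : ℝ) • W))
        = Sv - a • (Complex.I • T + W)
      module
    · show (0 : ℝ) + (-(a * y) + ⟪Complex.I • ((2 : ℝ) • (Complex.I • T) + (2 : ℝ) • W), Sv⟫)
        = -(a * y + 2 * ⟪T, Sv⟫)
      rw [hIQS Sv hSv]
      ring
  refine ⟨part1, ?_⟩
  have hB : (expAd n ((0, (2 : ℝ) • (Complex.I • T) + (2 : ℝ) • W, y) : S n)).toLinearMap (B n)
      = ((1, -(Complex.I • T) - W, -y) : S n) := by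
    show expAd n ((0, (2 : ℝ) • (Complex.I • T) + (2 : ℝ) • W, y) : S n) ((1, (0 : E n), 0) : S n)
      = _
    rw [part1 1 0 (zero_mem 𝔯)]
    refine Prod.ext rfl (Prod.ext ?_ ?_)
    · show (0 : E n) - (1 : ℝ) • (Complex.I • T + W) = -(Complex.I • T) - W
      module
    · show -(1 * y + 2 * ⟪T, (0 : E n)⟫) = -y
      rw [inner_zero_right]
      ring
  have hE : ∀ Sv, Sv ∈ 𝔯 →
      ((expAd n ((0, (2 : ℝ) • (Complex.I • T) + (2 : ℝ) • W, y) : S n)).toLinearMap ∘ₗ inE n) Sv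
        = ((0, Sv, -(2 * ⟪T, Sv⟫)) : S n) := by
    intro Sv hSv
    show expAd n ((0, (2 : ℝ) • (Complex.I • T) + (2 : ℝ) • W, y) : S n) ((0, Sv, 0) : S n) = _
    rw [part1 0 Sv hSv]
    refine Prod.ext rfl (Prod.ext ?_ ?_)
    · show Sv - (0 : ℝ) • (Complex.I • T + W) = Sv
      module
    · show -(0 * y + 2 * ⟪T, Sv⟫) = -(2 * ⟪T, Sv⟫)
      ring
  have hmap : Submodule.map
      (expAd n ((0, (2 : ℝ) • (Complex.I • T) + (2 : ℝ) • W, y) : S n)).toLinearMap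
      (Submodule.span ℝ {B n} ⊔ Submodule.map (inE n) 𝔯)
      = Submodule.span ℝ
          {(expAd n ((0, (2 : ℝ) • (Complex.I • T) + (2 : ℝ) • W, y) : S n)).toLinearMap (B n)} ⊔
        Submodule.map
          ((expAd n ((0, (2 : ℝ) • (Complex.I • T) + (2 : ℝ) • W, y) : S n)).toLinearMap ∘ₗ inE n)
          𝔯 := by
    rw [Submodule.map_sup, Submodule.map_span, Set.image_singleton, Submodule.map_comp]
  have hMain : Submodule.map
      ((expAd n ((0, (2 : ℝ) • (Complex.I • T) + (2 : ℝ) • W, y) : S n)).toLinearMap ∘ₗ inE n) 𝔯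
      = Submodule.span ℝ {((0, T, -(2 * ‖T‖ ^ 2)) : S n)} ⊔
        Submodule.map (inE n) (𝔯 ⊓ (Submodule.span ℝ {T})ᗮ) := by
    apply le_antisymm
    · rintro x hx
      rw [Submodule.mem_map] at hx
      obtain ⟨Sv, hSv, rfl⟩ := hx
      by_cases hT0 : T = 0
      · subst hT0
        have horth : Sv ∈ (Submodule.span ℝ ({0} : Set (E n)))ᗮ := by
          refine (Submodule.mem_orthogonal _ _).mpr fun u hu => ?_
          obtain ⟨r, rfl⟩ := Submodule.mem_span_singleton.mp hu
          simp
        have hxE : ((expAd n ((0, (2 : ℝ) • (Complex.I • (0 : E n)) + (2 : ℝ) • W, y) :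
            S n)).toLinearMap ∘ₗ inE n) Sv = inE n Sv := by
          rw [hE Sv hSv]
          refine Prod.ext rfl (Prod.ext rfl ?_)
          show -(2 * ⟪(0 : E n), Sv⟫) = 0
          rw [inner_zero_left]
          ring
        rw [hxE]
        exact Submodule.mem_sup_right (Submodule.mem_map_of_mem ⟨hSv, horth⟩)
      · have hTnorm : ‖T‖ ^ 2 ≠ 0 := pow_ne_zero _ (norm_ne_zero_iff.mpr hT0)
        set c : ℝ := ⟪T, Sv⟫ / ‖T‖ ^ 2 with hc
        have hS' : Sv - c • T ∈ 𝔯 := sub_mem hSv (Submodule.smul_mem _ _ hT)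
        have hTS' : ⟪T, Sv - c • T⟫ = 0 := by
          rw [inner_sub_right, real_inner_smul_right, real_inner_self_eq_norm_sq, hc]
          field_simp
          ring
        have horth : Sv - c • T ∈ (Submodule.span ℝ ({T} : Set (E n)))ᗮ := by
          refine (Submodule.mem_orthogonal _ _).mpr fun u hu => ?_
          obtain ⟨r, rfl⟩ := Submodule.mem_span_singleton.mp hu
          rw [real_inner_smul_left, hTS', mul_zero]
        have hxE : ((expAd n ((0, (2 : ℝ) • (Complex.I • T) + (2 : ℝ) • W, y) :
            S n)).toLinearMap ∘ₗ inE n) Sv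
            = c • ((0, T, -(2 * ‖T‖ ^ 2)) : S n) + inE n (Sv - c • T) := by
          rw [hE Sv hSv]
          refine Prod.ext ?_ (Prod.ext ?_ ?_)
          · show (0 : ℝ) = c • (0 : ℝ) + 0
            simp
          · show Sv = c • T + (Sv - c • T)
            module
          · show -(2 * ⟪T, Sv⟫) = c • -(2 * ‖T‖ ^ 2) + 0
            rw [hc, smul_eq_mul]
            field_simp
            ring
        rw [hxE]
        refine add_mem (Submodule.mem_sup_left ?_) (Submodule.mem_sup_right ?_)
        · exact Submodule.smul_mem _ _ (Submodule.mem_span_singleton_self _)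
        · exact Submodule.mem_map_of_mem ⟨hS', horth⟩
    · apply sup_le
      · rw [Submodule.span_le, Set.singleton_subset_iff]
        have hv2 : ((expAd n ((0, (2 : ℝ) • (Complex.I • T) + (2 : ℝ) • W, y) :
            S n)).toLinearMap ∘ₗ inE n) T = ((0, T, -(2 * ‖T‖ ^ 2)) : S n) := by
          rw [hE T hT]
          refine Prod.ext rfl (Prod.ext rfl ?_)
          show -(2 * ⟪T, T⟫) = -(2 * ‖T‖ ^ 2)
          rw [real_inner_self_eq_norm_sq]
        exact hv2 ▸ Submodule.mem_map_of_mem hT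
      · rintro x hx
        rw [Submodule.mem_map] at hx
        obtain ⟨Sv, ⟨hSv, horth⟩, rfl⟩ := hx
        have hTS : ⟪T, Sv⟫ = 0 :=
          ((Submodule.mem_orthogonal _ _).mp horth) T (Submodule.mem_span_singleton_self T)
        have hxE : ((expAd n ((0, (2 : ℝ) • (Complex.I • T) + (2 : ℝ) • W, y) :
            S n)).toLinearMap ∘ₗ inE n) Sv = inE n Sv := by
          rw [hE Sv hSv, hTS]
          refine Prod.ext rfl (Prod.ext rfl ?_)
          show -(2 * (0 : ℝ)) = 0
          ring
        exact hxE ▸ Submodule.mem_map_of_mem hSv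
  rw [hmap, hB, hMain, ← sup_assoc]

end CHn
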